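/- Let d ≥ 2 be an integer, ε ∈ (0,1], and for μ ∈ [0,1] set x(μ) = 1 + (d−1)·μ. Then for every λ ∈ [0,1], 1 + ε·d·∫₀^λ x(μ)^{(εd−1)/(1−d)} · x(μ)^{d/(d−1)} dμ ≥ (ε/2)·x(λ)^{2−ε}. -/

import Mathlib

lemma aux_ineq (ε Y Z : ℝ) (hε0 : 0 < ε) (hε1 : ε ≤ 1) (hZ : 1 ≤ Z) (hYZ : Z ≤ Y) :
    ε / 2 * Z ≤ 1 + ε * (Y - 1) / (2 - ε) := by
  have h2 : 0 < 2 - ε := by linarith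
  rw [← mul_le_mul_iff_of_pos_right h2]
  have hexp : (1 + ε * (Y - 1) / (2 - ε)) * (2 - ε) = (2 - ε) + ε * (Y - 1) := by
    field_simp
  rw [hexp]
  nlinarith [mul_nonneg hε0.le (sub_nonneg.2 hYZ),
    mul_nonneg (mul_nonneg hε0.le hε0.le) (sub_nonneg.2 hZ)]

/-- For an integer `d ≥ 2`, `ε ∈ (0,1]` and `x(μ) = 1 + (d−1)μ`, for every
`λ ∈ [0,1]` one has
`1 + ε·d·∫₀^λ x(μ)^((εd−1)/(1−d)) · x(μ)^(d/(d−1)) dμ ≥ (ε/2)·x(λ)^(2−ε)`. -/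
theorem t_e0_lower_bound (d : ℕ) (hd : 2 ≤ d) (ε : ℝ) (hε0 : 0 < ε) (hε1 : ε ≤ 1)
    (lam : ℝ) (h0 : 0 ≤ lam) (h1 : lam ≤ 1) :
    ε / 2 * (1 + ((d : ℝ) - 1) * lam) ^ (2 - ε) ≤
      1 + ε * (d : ℝ) * ∫ μ in (0 : ℝ)..lam,
        (1 + ((d : ℝ) - 1) * μ) ^ ((ε * (d : ℝ) - 1) / (1 - (d : ℝ))) *
          (1 + ((d : ℝ) - 1) * μ) ^ ((d : ℝ) / ((d : ℝ) - 1)) := by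
  have hd2 : (2 : ℝ) ≤ (d : ℝ) := by exact_mod_cast hd
  set c : ℝ := (d : ℝ) - 1 with hc_def
  have hc1 : 1 ≤ c := by simp [hc_def]; linarith
  have hc0 : 0 < c := by linarith
  have hcne : c ≠ 0 := ne_of_gt hc0
  have h1d : (1 : ℝ) - (d : ℝ) ≠ 0 := by simp [hc_def] at *; intro h; linarith
  set p : ℝ := (ε * (d : ℝ) - 1) / (1 - (d : ℝ)) with hp_def
  set q : ℝ := (d : ℝ) / ((d : ℝ) - 1) with hq_def
  set r : ℝ := p + q with hr_def
  have h2ε : 0 < 2 - ε := by linarith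
  have hdpos : (0 : ℝ) < (d : ℝ) := by linarith
  have hrc : (r + 1) * c = (d : ℝ) * (2 - ε) := by
    rw [hr_def, hp_def, hq_def, hc_def]
    have hd1 : (d : ℝ) - 1 ≠ 0 := ne_of_gt (by linarith)
    have hd1' : (-1 : ℝ) + (d : ℝ) ≠ 0 := ne_of_gt (by linarith)
    field_simp
    ring
  have hr1 : 0 < r + 1 := by
    have : (r + 1) * c = (d : ℝ) * (2 - ε) := hrc
    nlinarith [mul_pos hdpos h2ε]
  -- positivity of the base on [0, lam]
  have hbase : ∀ μ ∈ Set.uIcc (0 : ℝ) lam, (1 : ℝ) ≤ 1 + c * μ := by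
    intro μ hμ
    rw [Set.uIcc_of_le h0] at hμ
    nlinarith [hμ.1]
  -- the antiderivative
  set F : ℝ → ℝ := fun μ => (1 + c * μ) ^ (r + 1) / ((r + 1) * c) with hF_def
  have hderiv : ∀ μ ∈ Set.uIcc (0 : ℝ) lam,
      HasDerivAt F ((1 + c * μ) ^ p * (1 + c * μ) ^ q) μ := by
    intro μ hμ
    have hb := hbase μ hμ
    have hbpos : (0 : ℝ) < 1 + c * μ := by linarith
    have h1 : HasDerivAt (fun μ : ℝ => 1 + c * μ) c μ := by
      simpa using ((hasDerivAt_id μ).const_mul c).const_add 1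
    have h2 : HasDerivAt (fun μ : ℝ => (1 + c * μ) ^ (r + 1))
        (c * (r + 1) * (1 + c * μ) ^ (r + 1 - 1)) μ :=
      h1.rpow_const (Or.inl (ne_of_gt hbpos))
    have h3 := h2.div_const ((r + 1) * c)
    refine HasDerivAt.congr_deriv h3 ?_
    rw [← Real.rpow_add hbpos, show p + q = r from hr_def.symm,
      show r + 1 - 1 = r by ring]
    field_simp
  have hcont : ContinuousOn (fun μ : ℝ => (1 + c * μ) ^ p * (1 + c * μ) ^ q)
      (Set.uIcc (0 : ℝ) lam) := by
    have hb : ContinuousOn (fun μ : ℝ => 1 + c * μ) (Set.uIcc (0 : ℝ) lam) :=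
      (continuous_const.add (continuous_const.mul continuous_id)).continuousOn
    have hne : ∀ μ ∈ Set.uIcc (0 : ℝ) lam, (1 : ℝ) + c * μ ≠ 0 := fun μ hμ =>
      by have := hbase μ hμ; linarith
    exact (hb.rpow_const (fun μ hμ => Or.inl (hne μ hμ))).mul
      (hb.rpow_const (fun μ hμ => Or.inl (hne μ hμ)))
  have hint : (∫ μ in (0 : ℝ)..lam, (1 + c * μ) ^ p * (1 + c * μ) ^ q)
      = F lam - F 0 :=
    intervalIntegral.integral_eq_sub_of_hasDerivAt hderiv
      (hcont.intervalIntegrable)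
  rw [hint]
  have hF0 : F 0 = 1 / ((r + 1) * c) := by simp [hF_def, Real.one_rpow]
  have hFlam : F lam = (1 + c * lam) ^ (r + 1) / ((r + 1) * c) := rfl
  set X : ℝ := 1 + c * lam with hX_def
  have hX1 : 1 ≤ X := by nlinarith
  have hXp : 0 < X := by linarith
  -- exponent comparison
  have hexp_le : 2 - ε ≤ r + 1 := by
    have h : (2 - ε) * c ≤ (r + 1) * c := by
      rw [hrc]; nlinarith
    exact le_of_mul_le_mul_right h hc0
  set Y : ℝ := X ^ (r + 1) with hY_def
  set Z : ℝ := X ^ (2 - ε) with hZ_def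
  have hZ1 : 1 ≤ Z := Real.one_le_rpow hX1 (by linarith)
  have hYZ : Z ≤ Y := Real.rpow_le_rpow_of_exponent_le hX1 hexp_le
  have key : ε * (d : ℝ) * (F lam - F 0) = ε * (Y - 1) / (2 - ε) := by
    rw [hFlam, hF0, hrc]
    field_simp
  rw [key]
  exact aux_ineq ε Y Z hε0 hε1 hZ1 hYZ
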